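/- For positive integers n and r with r ≤ n(n−1)/2, one has (1 + n/r)^r ≤ e^n, and hence the number of permutations of {1,...,n} with at most r inversions is at most e^n (1 + r/n)^n. -/

import Mathlib

open Finset

/-- Number of inversions of a permutation. -/
def inversions {n : ℕ} (π : Equiv.Perm (Fin n)) : ℕ :=
  (Finset.univ.filter (fun q : Fin n × Fin n => q.1 < q.2 ∧ π q.2 < π q.1)).card

namespace KendallAux

variable {n : ℕ}

def code (π : Equiv.Perm (Fin n)) (i : Fin n) : ℕ :=
  (Finset.univ.filter (fun j : Fin n => i < j ∧ π j < π i)).card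

lemma sum_code (π : Equiv.Perm (Fin n)) : ∑ i, code π i = inversions π := by
  rw [inversions, Finset.card_eq_sum_card_fiberwise (f := Prod.fst) (t := univ)
    (fun x _ => mem_univ _)]
  refine Finset.sum_congr rfl fun i _ => ?_
  rw [code]
  refine Finset.card_bij' (fun j _ => ((i, j) : Fin n × Fin n)) (fun q _ => q.2) ?_ ?_ ?_ ?_
  · intro j hj
    simp only [mem_filter, mem_univ, true_and] at hj ⊢
    exact ⟨⟨hj.1, hj.2⟩, trivial⟩
  · rintro ⟨a, b⟩ hq
    simp only [mem_filter, mem_univ, true_and] at hq ⊢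
    obtain ⟨⟨h1, h2⟩, h3⟩ := hq
    subst h3; exact ⟨h1, h2⟩
  · intro j hj; rfl
  · rintro ⟨a, b⟩ hq
    simp only [mem_filter, mem_univ, true_and] at hq
    obtain ⟨-, h3⟩ := hq
    subst h3; rfl

lemma rank_eq (π : Equiv.Perm (Fin n)) (i : Fin n) (S : Finset (Fin n))
    (hS : ∀ x, x ∈ S ↔ ∀ j : Fin n, j < i → π j ≠ x) :
    (S.filter (· < π i)).card = code π i := by
  rw [code]
  refine Finset.card_bij' (fun x _ => π.symm x) (fun j _ => π j) ?_ ?_ ?_ ?_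
  · intro x hx
    simp only [mem_filter, mem_univ, true_and] at hx ⊢
    obtain ⟨hxS, hxlt⟩ := hx
    have hne : π.symm x ≠ i := by
      intro h; apply absurd hxlt; simp [← h]
    have hnlt : ¬ π.symm x < i := by
      intro h
      exact (hS x).mp hxS _ h (by simp)
    refine ⟨lt_of_le_of_ne (not_lt.mp hnlt) (Ne.symm hne), ?_⟩
    simpa using hxlt
  · intro j hj
    simp only [mem_filter, mem_univ, true_and] at hj ⊢
    refine ⟨(hS _).mpr fun k hk hne => ?_, hj.2⟩
    exact absurd (π.injective hne) (ne_of_lt (hk.trans hj.1))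
  · intro x hx; simp
  · intro j hj; simp

lemma code_injective (π σ : Equiv.Perm (Fin n)) (h : ∀ i, code π i = code σ i) : π = σ := by
  have key : ∀ k : ℕ, ∀ i : Fin n, (i : ℕ) = k → π i = σ i := by
    intro k
    induction k using Nat.strong_induction_on with
    | _ k ih =>
      intro i hik
      have ihlt : ∀ j : Fin n, j < i → π j = σ j := by
        intro j hj
        have hj' : (j : ℕ) < (i : ℕ) := Fin.lt_def.mp hj
        exact ih j (by omega) j rfl
      set S : Finset (Fin n) := univ \ (univ.filter (· < i)).image π with hSdef
      have hSπ : ∀ x, x ∈ S ↔ ∀ j : Fin n, j < i → π j ≠ x := by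
        intro x
        simp only [hSdef, mem_sdiff, mem_univ, true_and, mem_image, mem_filter]
        constructor
        · intro hx j hj hne
          exact hx ⟨j, hj, hne⟩
        · rintro hx ⟨j, hj, hne⟩
          exact hx j hj hne
      have hSσ : ∀ x, x ∈ S ↔ ∀ j : Fin n, j < i → σ j ≠ x := by
        intro x
        rw [hSπ]
        constructor
        · intro hx j hj; rw [← ihlt j hj]; exact hx j hj
        · intro hx j hj; rw [ihlt j hj]; exact hx j hj
      have hπmem : π i ∈ S := (hSπ _).mpr fun j hj hne =>
        absurd (π.injective hne) (ne_of_lt hj)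
      have hσmem : σ i ∈ S := (hSσ _).mpr fun j hj hne =>
        absurd (σ.injective hne) (ne_of_lt hj)
      have hcard : (S.filter (· < π i)).card = (S.filter (· < σ i)).card := by
        rw [rank_eq π i S hSπ, rank_eq σ i S hSσ, h]
      rcases lt_trichotomy (π i) (σ i) with hlt | heq | hlt
      · exfalso
        have hsub : (S.filter (· < π i)) ⊆ (S.filter (· < σ i)) := by
          intro x hx
          rw [Finset.mem_filter] at hx ⊢
          exact ⟨hx.1, lt_trans hx.2 hlt⟩
        have hss : (S.filter (· < π i)) ⊂ (S.filter (· < σ i)) :=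
          (Finset.ssubset_iff_of_subset hsub).mpr
            ⟨π i, mem_filter.mpr ⟨hπmem, hlt⟩, fun hc => absurd (mem_filter.mp hc).2 (lt_irrefl _)⟩
        exact absurd hcard (Nat.ne_of_lt (Finset.card_lt_card hss))
      · exact heq
      · exfalso
        have hsub : (S.filter (· < σ i)) ⊆ (S.filter (· < π i)) := by
          intro x hx
          rw [Finset.mem_filter] at hx ⊢
          exact ⟨hx.1, lt_trans hx.2 hlt⟩
        have hss : (S.filter (· < σ i)) ⊂ (S.filter (· < π i)) :=
          (Finset.ssubset_iff_of_subset hsub).mpr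
            ⟨σ i, mem_filter.mpr ⟨hσmem, hlt⟩, fun hc => absurd (mem_filter.mp hc).2 (lt_irrefl _)⟩
        exact absurd hcard.symm (Nat.ne_of_lt (Finset.card_lt_card hss))
  exact Equiv.ext fun i => key i i rfl

lemma card_finsum {β α : Type*} (s : Finset β) (f : β → Multiset α) :
    Multiset.card (∑ b ∈ s, f b) = ∑ b ∈ s, Multiset.card (f b) := by
  induction s using Finset.cons_induction with
  | empty => simp
  | cons a s ha ih => simp [Finset.sum_cons, ih]

lemma count_finsum {β α : Type*} [DecidableEq α] (s : Finset β) (f : β → Multiset α) (a : α) :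
    Multiset.count a (∑ b ∈ s, f b) = ∑ b ∈ s, Multiset.count a (f b) := by
  induction s using Finset.cons_induction with
  | empty => simp
  | cons x s hx ih => simp [Finset.sum_cons, Multiset.count_add, ih]

noncomputable def phi (r : ℕ) (π : Equiv.Perm (Fin n)) : Sym (Fin (n + 1)) r :=
  if h : inversions π ≤ r then
    ⟨(∑ i : Fin n, (code π i) • ({i.castSucc} : Multiset (Fin (n + 1)))) +
        (r - inversions π) • {Fin.last n}, by
      rw [Multiset.card_add, card_finsum, Multiset.card_nsmul]
      simp only [Multiset.card_nsmul, Multiset.card_singleton, mul_one]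
      rw [sum_code]
      omega⟩
  else Sym.replicate r (Fin.last n)

lemma count_phi (r : ℕ) (π : Equiv.Perm (Fin n)) (h : inversions π ≤ r) (i : Fin n) :
    Multiset.count i.castSucc (phi r π : Multiset (Fin (n + 1))) = code π i := by
  have hp : ((phi r π : Sym (Fin (n + 1)) r) : Multiset (Fin (n + 1))) =
      (∑ i : Fin n, (code π i) • ({i.castSucc} : Multiset (Fin (n + 1)))) +
        (r - inversions π) • {Fin.last n} := by
    unfold phi
    exact congrArg Subtype.val (dif_pos h)
  rw [hp, Multiset.count_add, count_finsum]
  have h1 : ∀ j : Fin n, Multiset.count i.castSucc ((code π j) • ({j.castSucc} : Multiset (Fin (n+1))))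
      = if i = j then code π j else 0 := by
    intro j
    rw [Multiset.count_nsmul, Multiset.count_singleton]
    by_cases hij : i = j
    · simp [hij]
    · simp [hij, fun hc => hij (Fin.castSucc_injective n hc)]
  rw [Finset.sum_congr rfl fun j _ => h1 j, Finset.sum_ite_eq]
  have h2 : Multiset.count i.castSucc ((r - inversions π) • ({Fin.last n} : Multiset (Fin (n+1)))) = 0 := by
    rw [Multiset.count_nsmul, Multiset.count_singleton, if_neg (Fin.castSucc_lt_last i).ne]
    ring
  simp [h2]

lemma phi_injOn (r : ℕ) (π σ : Equiv.Perm (Fin n)) (hπ : inversions π ≤ r)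
    (hσ : inversions σ ≤ r) (h : phi r π = phi r σ) : π = σ := by
  refine code_injective π σ fun i => ?_
  rw [← count_phi r π hπ i, ← count_phi r σ hσ i, h]

lemma card_le_choose (r : ℕ) :
    ((univ.filter (fun π : Equiv.Perm (Fin n) => inversions π ≤ r)).card) ≤ (n + r).choose r := by
  have : ((univ.filter (fun π : Equiv.Perm (Fin n) => inversions π ≤ r)).card)
      ≤ (univ : Finset (Sym (Fin (n + 1)) r)).card := by
    apply Finset.card_le_card_of_injOn (phi r) (fun _ _ => mem_univ _)
    intro π hπ σ hσ hps
    simp only [coe_filter, Set.mem_setOf_eq, mem_univ, true_and] at hπ hσ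
    exact phi_injOn r π σ hπ hσ hps
  calc _ ≤ _ := this
    _ = Fintype.card (Sym (Fin (n + 1)) r) := rfl
    _ = (n + r).choose r := by
        rw [Sym.card_sym_eq_choose, Fintype.card_fin]
        congr 1
        omega

lemma choose_mul_le (n r : ℕ) : (n + r).choose r * (n ^ n * r ^ r) ≤ (n + r) ^ (n + r) := by
  rw [add_pow n r (n + r)]
  have hmem : n ∈ Finset.range (n + r + 1) := by
    rw [Finset.mem_range]; omega
  calc (n + r).choose r * (n ^ n * r ^ r) = n ^ n * r ^ (n + r - n) * (n + r).choose n := by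
        have h : (n + r).choose r = (n + r).choose n := by
          have h2 := Nat.choose_symm (Nat.le_add_right n r)
          rwa [Nat.add_sub_cancel_left] at h2
        rw [h, Nat.add_sub_cancel_left]
        ring
    _ ≤ _ := Finset.single_le_sum
        (f := fun k => n ^ k * r ^ (n + r - k) * (n + r).choose k)
        (fun k _ => Nat.zero_le _) hmem

end KendallAux

/-- (1 + n/r)^r ≤ e^n, hence the number of permutations with at most r inversions is
at most e^n (1 + r/n)^n. -/
theorem card_kendall_ball_le_exp (n r : ℕ) (hn : 0 < n) (hr : 0 < r)
    (hr2 : r ≤ n * (n - 1) / 2) :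
    (1 + (n : ℝ) / r) ^ r ≤ Real.exp n
    ∧ ((Finset.univ.filter (fun π : Equiv.Perm (Fin n) => inversions π ≤ r)).card : ℝ)
        ≤ Real.exp n * (1 + (r : ℝ) / n) ^ n := by
  have hnR : (0 : ℝ) < n := by exact_mod_cast hn
  have hrR : (0 : ℝ) < r := by exact_mod_cast hr
  have part1 : (1 + (n : ℝ) / r) ^ r ≤ Real.exp n := by
    have h1 : (1 : ℝ) + (n : ℝ) / r ≤ Real.exp ((n : ℝ) / r) := by
      have := Real.add_one_le_exp ((n : ℝ) / r)
      linarith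
    have h2 : (1 + (n : ℝ) / r) ^ r ≤ (Real.exp ((n : ℝ) / r)) ^ r :=
      pow_le_pow_left₀ (by positivity) h1 r
    calc (1 + (n : ℝ) / r) ^ r ≤ (Real.exp ((n : ℝ) / r)) ^ r := h2
      _ = Real.exp ((n : ℝ) / r * r) := by rw [← Real.exp_nat_mul]; ring_nf
      _ = Real.exp n := by rw [div_mul_cancel₀ _ (ne_of_gt hrR)]
  refine ⟨part1, ?_⟩
  have hcount : ((Finset.univ.filter (fun π : Equiv.Perm (Fin n) => inversions π ≤ r)).card : ℝ)
      ≤ ((n + r).choose r : ℝ) := by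
    exact_mod_cast KendallAux.card_le_choose (n := n) r
  have hbin : ((n + r).choose r : ℝ) * ((n : ℝ) ^ n * (r : ℝ) ^ r) ≤ ((n : ℝ) + r) ^ (n + r) := by
    have := KendallAux.choose_mul_le n r
    exact_mod_cast this
  have hpos : (0 : ℝ) < (n : ℝ) ^ n * (r : ℝ) ^ r := by positivity
  have hC : ((n + r).choose r : ℝ) ≤ (1 + (r : ℝ) / n) ^ n * (1 + (n : ℝ) / r) ^ r := by
    rw [← le_div_iff₀ hpos] at hbin
    calc ((n + r).choose r : ℝ) ≤ ((n : ℝ) + r) ^ (n + r) / ((n : ℝ) ^ n * (r : ℝ) ^ r) := hbin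
      _ = (1 + (r : ℝ) / n) ^ n * (1 + (n : ℝ) / r) ^ r := by
          rw [pow_add]
          have e1 : (1 : ℝ) + (r : ℝ) / n = ((n : ℝ) + r) / n := by
            field_simp <;> ring
          have e2 : (1 : ℝ) + (n : ℝ) / r = ((n : ℝ) + r) / r := by
            field_simp <;> ring
          rw [e1, e2, div_pow, div_pow]
          field_simp
  calc ((Finset.univ.filter (fun π : Equiv.Perm (Fin n) => inversions π ≤ r)).card : ℝ)
      ≤ ((n + r).choose r : ℝ) := hcount
    _ ≤ (1 + (r : ℝ) / n) ^ n * (1 + (n : ℝ) / r) ^ r := hC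
    _ ≤ (1 + (r : ℝ) / n) ^ n * Real.exp n := by
        apply mul_le_mul_of_nonneg_left part1 (by positivity)
    _ = Real.exp n * (1 + (r : ℝ) / n) ^ n := mul_comm _ _
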